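/- Let ξ : ℕ → ℕ be the Collatz map and ξₙ its n-fold iterate. For every natural number n, the limit as m → ∞ of #{k : 1 ≤ k ≤ m and ξₙ(k) is even}/m exists and equals 2/3 + (−1)^{n+1}/(3·2^{n+1}), and the limit as m → ∞ of #{k : 1 ≤ k ≤ m and ξₙ(k) is odd}/m exists and equals 1/3 + (−1)ⁿ/(3·2^{n+1}). -/

import Mathlib

open Filter Topology

/-- The Collatz map. -/
def collatz (n : ℕ) : ℕ := if n % 2 = 0 then n / 2 else 3 * n + 1

/-- Auxiliary sequence counting even parities in a period. -/
def esq : ℕ → ℕ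
  | 0 => 1
  | 1 => 3
  | n + 2 => esq (n + 1) + 2 * esq n

lemma collatz_even' (m b : ℕ) (hb : b % 2 = 0) : collatz (2 * m + b) = m + b / 2 := by
  simp only [collatz]
  rw [if_pos (by omega)]
  omega

lemma collatz_two_odd (m b : ℕ) (hb : b % 2 = 1) :
    collatz (collatz (2 * m + b)) = 3 * m + (3 * b + 1) / 2 := by
  have h1 : collatz (2 * m + b) = 3 * (2 * m + b) + 1 := by
    simp only [collatz]; rw [if_neg (by omega)]
  rw [h1, show 3 * (2 * m + b) + 1 = 2 * (3 * m) + (3 * b + 1) by ring,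
    collatz_even' (3 * m) (3 * b + 1) (by omega)]

lemma collatz_shift (n : ℕ) : ∀ k t : ℕ, ∃ c : ℕ,
    collatz^[n] (k + 2 ^ (n + 1) * t) = collatz^[n] k + 2 * c * t := by
  induction n with
  | zero =>
    intro k t
    exact ⟨1, by norm_num⟩
  | succ n ih =>
    intro k t
    rcases Nat.mod_two_eq_zero_or_one k with hk2 | hk2
    · obtain ⟨c, hc⟩ := ih (k / 2) t
      refine ⟨c, ?_⟩
      rw [Function.iterate_succ_apply, Function.iterate_succ_apply]
      have h1 : k + 2 ^ (n + 2) * t = 2 * (2 ^ (n + 1) * t) + k := by ring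
      rw [h1, collatz_even' _ _ hk2]
      have h2 : collatz k = k / 2 := by simp only [collatz]; rw [if_pos hk2]
      rw [h2, show 2 ^ (n + 1) * t + k / 2 = k / 2 + 2 ^ (n + 1) * t by ring, hc]
    · obtain ⟨c, hc⟩ := ih (3 * k + 1) (6 * t)
      refine ⟨6 * c, ?_⟩
      rw [Function.iterate_succ_apply, Function.iterate_succ_apply]
      have hpar : (k + 2 ^ (n + 2) * t) % 2 = 1 := by
        have h2t : 2 ^ (n + 2) * t = 2 * (2 ^ (n + 1) * t) := by ring
        omega
      have h1 : collatz (k + 2 ^ (n + 2) * t) = 3 * (k + 2 ^ (n + 2) * t) + 1 := by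
        simp only [collatz]
        rw [if_neg (by omega)]
      have h2 : collatz k = 3 * k + 1 := by simp only [collatz]; rw [if_neg (by omega)]
      rw [h1, h2, show 3 * (k + 2 ^ (n + 2) * t) + 1 = (3 * k + 1) + 2 ^ (n + 1) * (6 * t) by ring,
        hc]
      ring

lemma collatz_parity_period (n k t : ℕ) :
    collatz^[n] (k + 2 ^ (n + 1) * t) % 2 = collatz^[n] k % 2 := by
  obtain ⟨c, hc⟩ := collatz_shift n k t
  have hc' : collatz^[n] (k + 2 ^ (n + 1) * t) = collatz^[n] k + 2 * (c * t) := by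
    rw [hc]; ring
  omega

lemma sum_range_double (f : ℕ → ℕ) (M : ℕ) :
    ∑ k ∈ Finset.range (2 * M), f k = ∑ u ∈ Finset.range M, (f (2 * u) + f (2 * u + 1)) := by
  induction M with
  | zero => simp
  | succ M ih =>
    rw [show 2 * (M + 1) = (2 * M) + 1 + 1 by ring, Finset.sum_range_succ, Finset.sum_range_succ,
      Finset.sum_range_succ, ih]
    omega

lemma sum_range_add' (f : ℕ → ℕ) (M N : ℕ) :
    ∑ k ∈ Finset.range (M + N), f k
      = (∑ k ∈ Finset.range M, f k) + ∑ k ∈ Finset.range N, f (M + k) := by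
  induction N with
  | zero => simp
  | succ N ih =>
    rw [show M + (N + 1) = (M + N) + 1 by ring, Finset.sum_range_succ, Finset.sum_range_succ, ih]
    omega

lemma sum_range_periodic (f : ℕ → ℕ) (P : ℕ) (hf : ∀ k, f (k + P) = f k) (q : ℕ) :
    ∑ k ∈ Finset.range (q * P), f k = q * ∑ k ∈ Finset.range P, f k := by
  have hiter : ∀ q k, f (k + q * P) = f k := by
    intro q
    induction q with
    | zero => simp
    | succ q ih =>
      intro k
      rw [show k + (q + 1) * P = (k + q * P) + P by ring, hf, ih]
  induction q with
  | zero => simp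
  | succ q ih =>
    rw [show (q + 1) * P = q * P + P by ring, sum_range_add', ih]
    have : ∀ k, f (q * P + k) = f k := fun k => by rw [Nat.add_comm, hiter]
    rw [Finset.sum_congr rfl (fun k _ => this k)]
    ring

lemma collatz_one_mod (x : ℕ) : collatz x % 2 = 0 ↔ x % 4 ≠ 2 := by
  simp only [collatz]
  split <;> omega

lemma count_formula : ∀ n a b : ℕ, a % 2 = 1 →
    (∑ s ∈ Finset.range (2 ^ (n + 1)), if collatz^[n] (a * s + b) % 2 = 0 then 1 else 0)
      = esq n := by
  intro n
  induction n using Nat.strong_induction_on with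
  | _ n ih =>
    match n with
    | 0 =>
      intro a b ha
      rw [show (2:ℕ) ^ (0 + 1) = 2 by norm_num]
      rw [Finset.sum_range_succ, Finset.sum_range_succ, Finset.sum_range_zero]
      simp only [Function.iterate_zero, id_eq, mul_zero, zero_add, mul_one, esq]
      have h1 : (a + b) % 2 = (1 + b) % 2 := by omega
      split_ifs <;> omega
    | 1 =>
      intro a b ha
      rw [show (2:ℕ) ^ (1 + 1) = 4 by norm_num]
      rw [Finset.sum_range_succ, Finset.sum_range_succ, Finset.sum_range_succ,
        Finset.sum_range_succ, Finset.sum_range_zero]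
      simp only [Function.iterate_one, mul_zero, zero_add, mul_one, collatz_one_mod, esq]
      split_ifs <;> omega
    | (m + 2) =>
      intro a b ha
      have ih1 := ih (m + 1) (by omega)
      have ih0 := ih m (by omega)
      rw [show (2:ℕ) ^ (m + 2 + 1) = 2 * 2 ^ (m + 2) by ring, sum_range_double,
        Finset.sum_add_distrib]
      rcases Nat.mod_two_eq_zero_or_one b with hb | hb
      · -- b even : even branch drops one level, odd branch drops two
        have e1 : ∀ u : ℕ, (if collatz^[m + 2] (a * (2 * u) + b) % 2 = 0 then 1 else 0)
            = (if collatz^[m + 1] (a * u + b / 2) % 2 = 0 then 1 else 0) := by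
          intro u
          rw [show a * (2 * u) + b = 2 * (a * u) + b by ring, Function.iterate_succ_apply,
            collatz_even' _ _ hb]
        have e2 : ∀ u : ℕ, (if collatz^[m + 2] (a * (2 * u + 1) + b) % 2 = 0 then 1 else 0)
            = (if collatz^[m] ((3 * a) * u + (3 * (a + b) + 1) / 2) % 2 = 0 then 1 else 0) := by
          intro u
          rw [show a * (2 * u + 1) + b = 2 * (a * u) + (a + b) by ring,
            Function.iterate_succ_apply, Function.iterate_succ_apply,
            collatz_two_odd _ _ (by omega), show 3 * (a * u) = (3 * a) * u by ring]
        rw [Finset.sum_congr rfl (fun u _ => e1 u), Finset.sum_congr rfl (fun u _ => e2 u)]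
        rw [ih1 a (b / 2) ha]
        have hper : ∀ u : ℕ,
            (if collatz^[m] ((3 * a) * (u + 2 ^ (m + 1)) + (3 * (a + b) + 1) / 2) % 2 = 0
              then 1 else 0)
            = (if collatz^[m] ((3 * a) * u + (3 * (a + b) + 1) / 2) % 2 = 0 then 1 else 0) := by
          intro u
          rw [show (3 * a) * (u + 2 ^ (m + 1)) + (3 * (a + b) + 1) / 2
              = ((3 * a) * u + (3 * (a + b) + 1) / 2) + 2 ^ (m + 1) * (3 * a) by ring,
            collatz_parity_period]
        rw [show (2:ℕ) ^ (m + 2) = 2 * 2 ^ (m + 1) by ring,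
          sum_range_periodic _ _ (fun k => hper k) 2, ih0 (3 * a) _ (by omega)]
        simp [esq]
      · -- b odd : even branch drops two levels, odd branch drops one
        have e1 : ∀ u : ℕ, (if collatz^[m + 2] (a * (2 * u) + b) % 2 = 0 then 1 else 0)
            = (if collatz^[m] ((3 * a) * u + (3 * b + 1) / 2) % 2 = 0 then 1 else 0) := by
          intro u
          rw [show a * (2 * u) + b = 2 * (a * u) + b by ring,
            Function.iterate_succ_apply, Function.iterate_succ_apply,
            collatz_two_odd _ _ hb, show 3 * (a * u) = (3 * a) * u by ring]
        have e2 : ∀ u : ℕ, (if collatz^[m + 2] (a * (2 * u + 1) + b) % 2 = 0 then 1 else 0)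
            = (if collatz^[m + 1] (a * u + (a + b) / 2) % 2 = 0 then 1 else 0) := by
          intro u
          rw [show a * (2 * u + 1) + b = 2 * (a * u) + (a + b) by ring,
            Function.iterate_succ_apply, collatz_even' _ _ (by omega)]
        rw [Finset.sum_congr rfl (fun u _ => e1 u), Finset.sum_congr rfl (fun u _ => e2 u)]
        rw [ih1 a ((a + b) / 2) ha]
        have hper : ∀ u : ℕ,
            (if collatz^[m] ((3 * a) * (u + 2 ^ (m + 1)) + (3 * b + 1) / 2) % 2 = 0
              then 1 else 0)
            = (if collatz^[m] ((3 * a) * u + (3 * b + 1) / 2) % 2 = 0 then 1 else 0) := by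
          intro u
          rw [show (3 * a) * (u + 2 ^ (m + 1)) + (3 * b + 1) / 2
              = ((3 * a) * u + (3 * b + 1) / 2) + 2 ^ (m + 1) * (3 * a) by ring,
            collatz_parity_period]
        rw [show (2:ℕ) ^ (m + 2) = 2 * 2 ^ (m + 1) by ring,
          sum_range_periodic _ _ (fun k => hper k) 2, ih0 (3 * a) _ (by omega)]
        simp [esq]
        ring

lemma esq_cast : ∀ n : ℕ, 3 * (esq n : ℝ) = 2 ^ (n + 2) + (-1) ^ (n + 1) := by
  have key : ∀ n : ℕ, 3 * (esq n : ℝ) = 2 ^ (n + 2) + (-1) ^ (n + 1) ∧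
      3 * (esq (n + 1) : ℝ) = 2 ^ (n + 3) + (-1) ^ (n + 2) := by
    intro n
    induction n with
    | zero => norm_num [esq]
    | succ n ih =>
      refine ⟨ih.2, ?_⟩
      have h : esq (n + 2) = esq (n + 1) + 2 * esq n := rfl
      rw [h]
      push_cast
      linear_combination ih.2 + 2 * ih.1
  exact fun n => (key n).1

lemma density_periodic (p : ℕ → Prop) [DecidablePred p] (P A : ℕ) (hP : 0 < P)
    (hper : ∀ k, p (k + P) ↔ p k)
    (hA : ((Finset.range P).filter p).card = A) :
    Tendsto (fun m : ℕ => (((Finset.Icc 1 m).filter p).card : ℝ) / m) atTop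
      (nhds ((A : ℝ) / P)) := by
  set C : ℕ → ℕ := fun m => ((Finset.range m).filter p).card with hC
  set D : ℕ → ℕ := fun m => ((Finset.Icc 1 m).filter p).card with hD
  have hCsum : ∀ m, C m = ∑ k ∈ Finset.range m, if p k then 1 else 0 := by
    intro m; exact Finset.card_filter _ _
  have hCmul : ∀ q, C (q * P) = q * A := by
    intro q
    rw [hCsum, sum_range_periodic _ P (fun k => by simp [hper k]) q]
    have : (∑ k ∈ Finset.range P, if p k then 1 else 0) = A := by
      rw [← Finset.card_filter, hA]
    rw [this]
  have hmono : ∀ {m m'}, m ≤ m' → C m ≤ C m' :=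
    fun h => Finset.card_le_card (Finset.filter_subset_filter _ (Finset.range_subset_range.2 h))
  have hlow : ∀ m, (m / P) * A ≤ C m := by
    intro m
    rw [← hCmul]
    exact hmono (Nat.div_mul_le_self m P)
  have hup : ∀ m, C m ≤ (m / P + 1) * A := by
    intro m
    rw [← hCmul]
    refine hmono ?_
    have h1 := Nat.div_add_mod m P
    have h2 := Nat.mod_lt m hP
    calc m = P * (m / P) + m % P := h1.symm
    _ ≤ P * (m / P) + P := by omega
    _ = (m / P + 1) * P := by ring
  have hD1 : ∀ m, D m ≤ C (m + 1) := by
    intro m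
    apply Finset.card_le_card
    apply Finset.filter_subset_filter
    intro k hk
    simp only [Finset.mem_Icc] at hk
    simp only [Finset.mem_range]
    omega
  have hD2 : ∀ m, C (m + 1) ≤ D m + 1 := by
    intro m
    have hsub : Finset.range (m + 1) ⊆ insert 0 (Finset.Icc 1 m) := by
      intro k hk
      simp only [Finset.mem_range] at hk
      simp only [Finset.mem_insert, Finset.mem_Icc]
      omega
    calc C (m + 1) ≤ ((insert 0 (Finset.Icc 1 m)).filter p).card :=
          Finset.card_le_card (Finset.filter_subset_filter _ hsub)
    _ ≤ (insert 0 ((Finset.Icc 1 m).filter p)).card := by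
          apply Finset.card_le_card
          rw [Finset.filter_insert]
          split
          · exact subset_rfl
          · exact Finset.subset_insert _ _
    _ ≤ D m + 1 := Finset.card_insert_le _ _
  -- key natural-number inequalities
  have hnat_low : ∀ m : ℕ, A * m ≤ (D m + A + 1) * P := by
    intro m
    have h1 : m < (m / P + 1) * P := by
      have h1 := Nat.div_add_mod m P
      have h2 := Nat.mod_lt m hP
      calc m = P * (m / P) + m % P := h1.symm
      _ < P * (m / P) + P := by omega
      _ = (m / P + 1) * P := by ring
    calc A * m ≤ A * ((m / P + 1) * P) := Nat.mul_le_mul_left _ (le_of_lt h1)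
    _ = (m / P * A + A) * P := by ring
    _ ≤ (C m + A) * P := Nat.mul_le_mul_right _ (by have := hlow m; omega)
    _ ≤ (D m + A + 1) * P := by
        have h3 : C m ≤ C (m + 1) := hmono (Nat.le_succ m)
        have h4 := hD2 m
        exact Nat.mul_le_mul_right _ (by omega)
  have hnat_up : ∀ m : ℕ, D m * P ≤ A * m + (2 * A + 1) * P := by
    intro m
    have h1 : (m + 1) / P * P ≤ m + 1 := Nat.div_mul_le_self _ _
    calc D m * P ≤ C (m + 1) * P := Nat.mul_le_mul_right _ (hD1 m)
    _ ≤ (((m + 1) / P + 1) * A) * P := Nat.mul_le_mul_right _ (hup (m + 1))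
    _ = ((m + 1) / P * P) * A + A * P := by ring
    _ ≤ (m + 1) * A + A * P := Nat.add_le_add_right (Nat.mul_le_mul_right _ h1) _
    _ = A * m + (A + A * P) := by ring
    _ ≤ A * m + (2 * A + 1) * P := by nlinarith [hP]
  -- pass to the reals and squeeze
  have hPR : (0 : ℝ) < P := by exact_mod_cast hP
  set K : ℝ := 2 * A + 1 with hK
  have hlim1 : Tendsto (fun m : ℕ => (A : ℝ) / P - K / m) atTop (nhds ((A : ℝ) / P)) := by
    have := (tendsto_const_div_atTop_nhds_zero_nat K)
    have h := (tendsto_const_nhds (x := (A : ℝ) / P) (f := atTop)).sub this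
    simpa using h
  have hlim2 : Tendsto (fun m : ℕ => (A : ℝ) / P + K / m) atTop (nhds ((A : ℝ) / P)) := by
    have := (tendsto_const_div_atTop_nhds_zero_nat K)
    have h := (tendsto_const_nhds (x := (A : ℝ) / P) (f := atTop)).add this
    simpa using h
  refine tendsto_of_tendsto_of_tendsto_of_le_of_le' hlim1 hlim2 ?_ ?_
  · filter_upwards [eventually_ge_atTop 1] with m hm
    have hmR : (0 : ℝ) < m := by exact_mod_cast hm
    have h1 : (A : ℝ) * m ≤ (D m + A + 1) * P := by exact_mod_cast hnat_low m
    rw [div_sub_div _ _ (ne_of_gt hPR) (ne_of_gt hmR), div_le_div_iff₀ (by positivity) hmR]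
    have hA0 : (0 : ℝ) ≤ A := Nat.cast_nonneg A
    have hKA : (A : ℝ) + 1 ≤ K := by rw [hK]; linarith
    have key : (A : ℝ) * m - P * K ≤ (D m : ℝ) * P := by
      nlinarith [mul_le_mul_of_nonneg_right hKA (le_of_lt hPR)]
    nlinarith [mul_le_mul_of_nonneg_right key (le_of_lt hmR)]
  · filter_upwards [eventually_ge_atTop 1] with m hm
    have hmR : (0 : ℝ) < m := by exact_mod_cast hm
    have h1 : (D m : ℝ) * P ≤ A * m + K * P := by
      rw [hK]
      exact_mod_cast hnat_up m
    rw [div_add_div _ _ (ne_of_gt hPR) (ne_of_gt hmR), div_le_div_iff₀ hmR (by positivity)]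
    nlinarith [mul_le_mul_of_nonneg_right h1 (le_of_lt hmR)]

theorem collatz_iterate_parity_density (n : ℕ) :
    Tendsto (fun m : ℕ =>
        (((Finset.Icc 1 m).filter (fun k => collatz^[n] k % 2 = 0)).card : ℝ) / m)
      atTop (nhds (2/3 + (-1 : ℝ) ^ (n + 1) / (3 * 2 ^ (n + 1)))) ∧
    Tendsto (fun m : ℕ =>
        (((Finset.Icc 1 m).filter (fun k => collatz^[n] k % 2 = 1)).card : ℝ) / m)
      atTop (nhds (1/3 + (-1 : ℝ) ^ n / (3 * 2 ^ (n + 1)))) := by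
  have hP : 0 < 2 ^ (n + 1) := Nat.pow_pos (by norm_num)
  have hper0 : ∀ k, collatz^[n] (k + 2 ^ (n + 1)) % 2 = 0 ↔ collatz^[n] k % 2 = 0 := by
    intro k
    have := collatz_parity_period n k 1
    rw [mul_one] at this
    omega
  have hper1 : ∀ k, collatz^[n] (k + 2 ^ (n + 1)) % 2 = 1 ↔ collatz^[n] k % 2 = 1 := by
    intro k
    have := collatz_parity_period n k 1
    rw [mul_one] at this
    omega
  have hAe : ((Finset.range (2 ^ (n + 1))).filter (fun k => collatz^[n] k % 2 = 0)).card
      = esq n := by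
    rw [Finset.card_filter]
    have := count_formula n 1 0 (by norm_num)
    simpa using this
  have hbound : esq n ≤ 2 ^ (n + 1) := by
    rw [← hAe]
    simpa using Finset.card_filter_le (Finset.range (2 ^ (n + 1)))
      (fun k => collatz^[n] k % 2 = 0)
  have hAo : ((Finset.range (2 ^ (n + 1))).filter (fun k => collatz^[n] k % 2 = 1)).card
      = 2 ^ (n + 1) - esq n := by
    have h := Finset.card_filter_add_card_filter_not
      (s := Finset.range (2 ^ (n + 1))) (p := fun k => collatz^[n] k % 2 = 0)
    rw [Finset.card_range, hAe] at h
    have heq : (Finset.range (2 ^ (n + 1))).filter (fun k => ¬ (collatz^[n] k % 2 = 0))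
        = (Finset.range (2 ^ (n + 1))).filter (fun k => collatz^[n] k % 2 = 1) :=
      Finset.filter_congr (fun x _ => by omega)
    rw [heq] at h
    omega
  have h3 := esq_cast n
  have h2ne : ((2 : ℝ)) ^ (n + 1) ≠ 0 := by positivity
  constructor
  · have h := density_periodic (fun k => collatz^[n] k % 2 = 0) (2 ^ (n + 1)) (esq n)
      hP hper0 hAe
    have hval : ((esq n : ℝ)) / ((2 ^ (n + 1) : ℕ) : ℝ)
        = 2/3 + (-1 : ℝ) ^ (n + 1) / (3 * 2 ^ (n + 1)) := by
      push_cast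
      field_simp
      linear_combination h3
    rwa [hval] at h
  · have h := density_periodic (fun k => collatz^[n] k % 2 = 1) (2 ^ (n + 1))
      (2 ^ (n + 1) - esq n) hP hper1 hAo
    have hval : (((2 ^ (n + 1) - esq n : ℕ) : ℝ)) / ((2 ^ (n + 1) : ℕ) : ℝ)
        = 1/3 + (-1 : ℝ) ^ n / (3 * 2 ^ (n + 1)) := by
      rw [Nat.cast_sub hbound]
      push_cast
      field_simp
      linear_combination -h3
    rwa [hval] at h
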